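/- Let A be a {0,1}-valued n×n matrix with all row and column sums at least 1, and define the 2-marginals of the previous construction for 3-tables of size (n,n,2). A nonnegative integer n×n matrix Σ arises as the slice (x_{i,j,1}) of some 3-table x with these 2-marginals if and only if Σ is the permutation matrix of some permutation σ of {1,...,n} satisfying A_{i,σ(i)} = 1 for all i. -/
import Mathlib

/-- A matrix S arises as the first slice of a 3-table with the permanent
construction's 2-marginals iff S is the permutation matrix of a permutation σ
with A i (σ i) = 1 for all i. -/
theorem slice_iff_permutation_matrix (n : ℕ) (A : Fin n → Fin n → ℕ)
    (hA : ∀ i j, A i j ≤ 1)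
    (hrow : ∀ i, 1 ≤ ∑ j, A i j) (hcol : ∀ j, 1 ≤ ∑ i, A i j)
    (S : Fin n → Fin n → ℕ) :
    (∃ x : Fin n → Fin n → Fin 2 → ℕ,
      (∀ i j, ∑ k, x i j k = A i j) ∧
      (∀ i, ∑ j, x i j 0 = 1) ∧
      (∀ j, ∑ i, x i j 0 = 1) ∧
      (∀ i, ∑ j, x i j 1 = (∑ j, A i j) - 1) ∧
      (∀ j, ∑ i, x i j 1 = (∑ i, A i j) - 1) ∧
      (∀ i j, x i j 0 = S i j)) ↔
    (∃ σ : Equiv.Perm (Fin n),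
      (∀ i, A i (σ i) = 1) ∧
      (∀ i j, S i j = if σ i = j then 1 else 0)) := by
  constructor
  · rintro ⟨x, hsum, hr0, hc0, hr1, hc1, hS⟩
    -- S has row and column sums 1
    have hSr : ∀ i, ∑ j, S i j = 1 := by
      intro i; rw [← hr0 i]; exact Finset.sum_congr rfl fun j _ => (hS i j).symm
    have hSc : ∀ j, ∑ i, S i j = 1 := by
      intro j; rw [← hc0 j]; exact Finset.sum_congr rfl fun i _ => (hS i j).symm
    have hSle : ∀ i j, S i j ≤ 1 := by
      intro i j
      calc S i j ≤ ∑ j', S i j' := Finset.single_le_sum (fun _ _ => Nat.zero_le _) (Finset.mem_univ j)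
        _ = 1 := hSr i
    have hex : ∀ i, ∃ j, S i j = 1 := by
      intro i
      by_contra hc
      push_neg at hc
      have h0 : ∀ j, S i j = 0 := fun j => by
        have := hSle i j; have := hc j; omega
      have := hSr i
      rw [Finset.sum_eq_zero (fun j _ => h0 j)] at this
      exact absurd this (by norm_num)
    choose f hf using hex
    have hinj : Function.Injective f := by
      intro a b hab
      by_contra hne
      have hSa : S a (f a) = 1 := hf a
      have hSb : S b (f a) = 1 := by rw [hab]; exact hf b
      have h2 : 2 ≤ ∑ i, S i (f a) := by
        calc (2:ℕ) = ∑ i ∈ ({a, b} : Finset (Fin n)), S i (f a) := by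
              rw [Finset.sum_pair hne, hSa, hSb]
          _ ≤ ∑ i, S i (f a) :=
              Finset.sum_le_sum_of_subset (Finset.subset_univ _)
      rw [hSc (f a)] at h2; omega
    let σ := Equiv.ofBijective f ((Finite.injective_iff_bijective).mp hinj)
    refine ⟨σ, fun i => ?_, fun i j => ?_⟩
    · have h1 : S i (f i) = 1 := hf i
      have h2 : x i (f i) 0 ≤ A i (f i) := by
        rw [← hsum i (f i), Fin.sum_univ_two]; omega
      rw [hS i (f i)] at h2
      have := hA i (f i)
      show A i (f i) = 1
      omega
    · show S i j = if f i = j then 1 else 0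
      by_cases h : f i = j
      · subst h; simp [hf i]
      · simp only [if_neg h]
        by_contra hne
        have h1 : 1 ≤ S i j := by omega
        have := Finset.add_sum_erase Finset.univ (S i) (Finset.mem_univ j)
        have hfi : f i ∈ Finset.univ.erase j := Finset.mem_erase.mpr ⟨h, Finset.mem_univ _⟩
        have : S i (f i) ≤ ∑ j' ∈ Finset.univ.erase j, S i j' :=
          Finset.single_le_sum (fun _ _ => Nat.zero_le _) hfi
        have h2 := hSr i
        rw [← Finset.add_sum_erase Finset.univ (S i) (Finset.mem_univ j)] at h2
        have := hf i
        omega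
  · rintro ⟨σ, hAσ, hSσ⟩
    have hle : ∀ i j, S i j ≤ A i j := by
      intro i j
      rw [hSσ i j]
      by_cases h : σ i = j
      · subst h; simp [hAσ i]
      · simp [h]
    refine ⟨fun i j k => if k = 0 then S i j else A i j - S i j, ?_, ?_, ?_, ?_, ?_, ?_⟩
    · intro i j
      rw [Fin.sum_univ_two]
      have := hle i j
      simp only [show ((0 : Fin 2) = 0) = True by simp,
        show ((1 : Fin 2) = 0) = False by simp, if_true, if_false]
      omega
    · intro i
      simp only [if_pos rfl]
      calc ∑ j, S i j = ∑ j, if σ i = j then 1 else 0 :=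
            Finset.sum_congr rfl fun j _ => hSσ i j
        _ = 1 := by simp
    · intro j
      simp only [if_pos rfl]
      calc ∑ i, S i j = ∑ i, if σ i = j then 1 else 0 :=
            Finset.sum_congr rfl fun i _ => hSσ i j
        _ = ∑ i, if i = σ.symm j then 1 else 0 := by
            refine Finset.sum_congr rfl fun i _ => ?_
            congr 1
            simp [Equiv.apply_eq_iff_eq_symm_apply]
        _ = 1 := by simp
    · intro i
      have hS1 : ∑ j, S i j = 1 := by
        calc ∑ j, S i j = ∑ j, if σ i = j then 1 else 0 :=
              Finset.sum_congr rfl fun j _ => hSσ i j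
          _ = 1 := by simp
      simp only [show ((1 : Fin 2) = 0) = False by simp, if_false]
      have key : ∑ j, (A i j - S i j) + ∑ j, S i j = ∑ j, A i j := by
        rw [← Finset.sum_add_distrib]
        exact Finset.sum_congr rfl fun j _ => Nat.sub_add_cancel (hle i j)
      omega
    · intro j
      have hS1 : ∑ i, S i j = 1 := by
        calc ∑ i, S i j = ∑ i, if σ i = j then 1 else 0 :=
              Finset.sum_congr rfl fun i _ => hSσ i j
          _ = ∑ i, if i = σ.symm j then 1 else 0 := by
              refine Finset.sum_congr rfl fun i _ => ?_
              congr 1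
              simp [Equiv.apply_eq_iff_eq_symm_apply]
          _ = 1 := by simp
      simp only [show ((1 : Fin 2) = 0) = False by simp, if_false]
      have key : ∑ i, (A i j - S i j) + ∑ i, S i j = ∑ i, A i j := by
        rw [← Finset.sum_add_distrib]
        exact Finset.sum_congr rfl fun i _ => Nat.sub_add_cancel (hle i j)
      omega
    · intro i j; simp
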